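/- For every integer M > 1 there exists a leafless rooted tree T of bounded degree in which every vertex has either exactly 1 or exactly M children, infinitely many vertices have exactly M children, and infinitely many vertices have exactly 1 child (so the essential maximum branching number is M and the essential minimum branching number is 1), such that for every 1 ≤ p < ∞ the kernel of the shift operator on ℓ^p(T) is trivial: the only f ∈ ℓ^p(T) with Sf = 0 is f = 0. -/

import Mathlib

/-- The shift (adjacency) operator: `(Sf)(u) = ∑_{v ~ u} f(v)`. -/
noncomputable def shiftOp {V : Type*} (G : SimpleGraph V) (f : V → ℂ) (u : V) : ℂ :=
  ∑ᶠ v ∈ G.neighborSet u, f v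

/-- The children of a vertex `v` of the tree `T` rooted at `o`. -/
def children {V : Type*} (T : SimpleGraph V) (o v : V) : Set V :=
  {u | T.Adj v u ∧ T.dist o u = T.dist o v + 1}

/-- `β(v)`: the number of children of `v`. -/
noncomputable def br {V : Type*} (T : SimpleGraph V) (o v : V) : ℕ :=
  (children T o v).ncard

/-- Membership in ℓ^p: `∑_{v} |f(v)|^p < ∞`. -/
def memlp {V : Type*} (f : V → ℂ) (p : ℝ) : Prop :=
  Summable fun v => ‖f v‖ ^ p

open SimpleGraph Set

namespace TFP

variable {V : Type*} (π : V → V) (o : V) (d : V → ℕ)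

def PG : SimpleGraph V := SimpleGraph.fromRel (fun u v => π u = v)

lemma pg_adj {u v : V} : (PG π).Adj u v ↔ u ≠ v ∧ (π u = v ∨ π v = u) := by
  simp [PG, SimpleGraph.fromRel_adj]

lemma pi_ne (hd : ∀ v, v ≠ o → d v = d (π v) + 1) {v : V} (hv : v ≠ o) : π v ≠ v := by
  intro h
  have := hd v hv
  rw [h] at this
  omega

lemma adj_parent (hd : ∀ v, v ≠ o → d v = d (π v) + 1) {v : V} (hv : v ≠ o) :
    (PG π).Adj v (π v) :=
  (pg_adj π).2 ⟨(pi_ne π o d hd hv).symm, Or.inl rfl⟩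

lemma eq_root_of_d_eq_zero (hd : ∀ v, v ≠ o → d v = d (π v) + 1) {v : V} (hv : d v = 0) :
    v = o := by
  by_contra h
  have := hd v h
  omega

lemma d_adj (hπo : π o = o) (hd : ∀ v, v ≠ o → d v = d (π v) + 1)
    {u v : V} (h : (PG π).Adj u v) : d v = d u + 1 ∨ d u = d v + 1 := by
  rcases (pg_adj π).1 h with ⟨hne, h1 | h1⟩
  · right
    have hu : u ≠ o := by
      rintro rfl
      rw [hπo] at h1
      exact hne h1
    rw [← h1]
    exact hd u hu
  · left
    have hv : v ≠ o := by
      rintro rfl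
      rw [hπo] at h1
      exact hne h1.symm
    rw [← h1]
    exact hd v hv

lemma d_pi_le (hπo : π o = o) (hd : ∀ v, v ≠ o → d v = d (π v) + 1) (v : V) :
    d (π v) ≤ d v := by
  by_cases hv : v = o
  · rw [hv, hπo]
  · have := hd v hv; omega

lemma d_iterate_le (hπo : π o = o) (hd : ∀ v, v ≠ o → d v = d (π v) + 1) (k : ℕ) (v : V) :
    d (π^[k] v) ≤ d v := by
  induction k with
  | zero => simp
  | succ k ih =>
    rw [Function.iterate_succ_apply']
    exact le_trans (d_pi_le π o d hπo hd _) ih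

/-- If `y` is not a descendant of `x ≠ o` then any walk from `x` to `y` visits `π x`. -/
lemma parent_mem_support (hπo : π o = o) (hd : ∀ v, v ≠ o → d v = d (π v) + 1) :
    ∀ N : ℕ, ∀ {x y : V} (q : (PG π).Walk x y), q.length ≤ N → x ≠ o →
      (∀ k, π^[k] y ≠ x) → π x ∈ q.support := by
  haveI := Classical.decEq V
  intro N
  induction N with
  | zero =>
    intro x y q hlen hx hdesc
    cases q with
    | nil => exact absurd (by simp) (hdesc 0)
    | cons h r => simp at hlen
  | succ N ih =>
    intro x y q hlen hx hdesc
    cases q with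
    | nil => exact absurd (by simp) (hdesc 0)
    | @cons _ z _ h r =>
      by_cases hz : π x = z
      · rw [Walk.support_cons]
        exact List.mem_cons_of_mem _ (hz ▸ r.start_mem_support)
      · have hzx : π z = x := ((pg_adj π).1 h).2.resolve_left hz
        have hzo : z ≠ o := by
          rintro rfl
          rw [hπo] at hzx
          exact hx hzx.symm
        have hdz : ∀ k, π^[k] y ≠ z := by
          intro k e
          exact hdesc (k + 1) (by rw [Function.iterate_succ_apply', e, hzx])
        have hlenr : r.length ≤ N := by
          simp only [Walk.length_cons] at hlen
          omega
        have hxmem : x ∈ r.support := hzx ▸ ih r hlenr hzo hdz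
        have hdrop := ih (r.dropUntil x hxmem)
          (le_trans (Walk.length_dropUntil_le r hxmem) hlenr) hx hdesc
        rw [Walk.support_cons]
        exact List.mem_cons_of_mem _ (Walk.support_dropUntil_subset r hxmem hdrop)

lemma path_unique_aux (hπo : π o = o) (hdo : d o = 0)
    (hd : ∀ v, v ≠ o → d v = d (π v) + 1) :
    ∀ N : ℕ, ∀ {x y : V} (p q : (PG π).Walk x y), d x + d y ≤ N → d y ≤ d x →
      p.IsPath → q.IsPath → p = q := by
  intro N
  induction N using Nat.strong_induction_on with
  | _ N ih =>
  intro x y p q hN hyx hp hq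
  by_cases hxy : x = y
  · subst hxy
    rw [Walk.isPath_iff_eq_nil.1 hp, Walk.isPath_iff_eq_nil.1 hq]
  · have hxo : x ≠ o := by
      intro hxeq
      rw [hxeq, hdo] at hyx
      exact hxy (hxeq.trans (eq_root_of_d_eq_zero π o d hd (Nat.le_zero.1 hyx)).symm)
    have hnd : ∀ k, π^[k] y ≠ x := by
      intro k e
      cases k with
      | zero => exact hxy (by simpa using e.symm)
      | succ j =>
        rw [Function.iterate_succ_apply'] at e
        have hwo : π^[j] y ≠ o := by
          intro e'
          rw [e', hπo] at e
          exact hxo e.symm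
        have h1 := hd _ hwo
        rw [e] at h1
        have h2 := d_iterate_le π o d hπo hd j y
        omega
    cases p with
    | nil => exact absurd rfl hxy
    | @cons _ z _ hadj rp =>
      cases q with
      | nil => exact absurd rfl hxy
      | @cons _ z' _ hadj' rq =>
        have hz : z = π x := by
          rcases (pg_adj π).1 hadj with ⟨_, h1 | h1⟩
          · exact h1.symm
          · exfalso
            have hzo : z ≠ o := by
              rintro rfl
              rw [hπo] at h1
              exact hxo h1.symm
            have hdz : ∀ k, π^[k] y ≠ z := by
              intro k e
              exact hnd (k + 1) (by rw [Function.iterate_succ_apply', e, h1])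
            have hxmem : x ∈ rp.support :=
              h1 ▸ parent_mem_support π o d hπo hd rp.length rp le_rfl hzo hdz
            exact ((Walk.cons_isPath_iff _ _).1 hp).2 hxmem
        have hz' : z' = π x := by
          rcases (pg_adj π).1 hadj' with ⟨_, h1 | h1⟩
          · exact h1.symm
          · exfalso
            have hzo : z' ≠ o := by
              rintro rfl
              rw [hπo] at h1
              exact hxo h1.symm
            have hdz : ∀ k, π^[k] y ≠ z' := by
              intro k e
              exact hnd (k + 1) (by rw [Function.iterate_succ_apply', e, h1])
            have hxmem : x ∈ rq.support :=
              h1 ▸ parent_mem_support π o d hπo hd rq.length rq le_rfl hzo hdz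
            exact ((Walk.cons_isPath_iff _ _).1 hq).2 hxmem
        subst hz
        subst hz'
        have hdx := hd x hxo
        have hreq : rp = rq := by
          by_cases hcase : d y ≤ d (π x)
          · exact ih (d (π x) + d y) (by omega) rp rq le_rfl hcase
              ((Walk.cons_isPath_iff _ _).1 hp).1 ((Walk.cons_isPath_iff _ _).1 hq).1
          · have hrev := ih (d y + d (π x)) (by omega) rp.reverse rq.reverse le_rfl
              (by omega) (((Walk.cons_isPath_iff _ _).1 hp).1).reverse
              (((Walk.cons_isPath_iff _ _).1 hq).1).reverse
            have := congrArg Walk.reverse hrev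
            simpa using this
        rw [hreq]

lemma path_unique (hπo : π o = o) (hdo : d o = 0)
    (hd : ∀ v, v ≠ o → d v = d (π v) + 1) {x y : V} (p q : (PG π).Walk x y)
    (hp : p.IsPath) (hq : q.IsPath) : p = q := by
  rcases le_total (d y) (d x) with h | h
  · exact path_unique_aux π o d hπo hdo hd (d x + d y) p q le_rfl h hp hq
  · have := path_unique_aux π o d hπo hdo hd (d y + d x) p.reverse q.reverse le_rfl h
      hp.reverse hq.reverse
    have := congrArg Walk.reverse this
    simpa using this

lemma reach (hπo : π o = o) (hd : ∀ v, v ≠ o → d v = d (π v) + 1) :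
    ∀ (n : ℕ) (x : V), d x ≤ n → (PG π).Reachable x o := by
  intro n
  induction n with
  | zero =>
    intro x hx
    rw [eq_root_of_d_eq_zero π o d hd (Nat.le_zero.1 hx)]
  | succ n ih =>
    intro x hx
    by_cases h : x = o
    · rw [h]
    · refine ((adj_parent π o d hd h).reachable).trans (ih (π x) ?_)
      have := hd x h
      omega

lemma connected (hπo : π o = o) (hd : ∀ v, v ≠ o → d v = d (π v) + 1) :
    (PG π).Connected := by
  haveI : Nonempty V := ⟨o⟩
  exact ⟨fun x y => (reach π o d hπo hd (d x) x le_rfl).trans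
    (reach π o d hπo hd (d y) y le_rfl).symm⟩

lemma isTree (hπo : π o = o) (hdo : d o = 0) (hd : ∀ v, v ≠ o → d v = d (π v) + 1) :
    (PG π).IsTree := by
  refine ⟨connected π o d hπo hd, ?_⟩
  rw [isAcyclic_iff_path_unique]
  intro v w p q
  exact Subtype.ext (path_unique π o d hπo hdo hd p.1 q.1 p.2 q.2)

lemma d_le_walk (hπo : π o = o) (hd : ∀ v, v ≠ o → d v = d (π v) + 1) :
    ∀ {u v : V} (w : (PG π).Walk u v), d v ≤ d u + w.length := by
  intro u v w
  induction w with
  | nil => simp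
  | @cons a b c h p ih =>
    have := d_adj π o d hπo hd h
    rw [Walk.length_cons]
    omega

lemma exists_walk (hπo : π o = o) (hdo : d o = 0)
    (hd : ∀ v, v ≠ o → d v = d (π v) + 1) :
    ∀ (n : ℕ) (x : V), d x ≤ n → ∃ w : (PG π).Walk x o, w.length = d x := by
  intro n
  induction n with
  | zero =>
    intro x hx
    have hxo := eq_root_of_d_eq_zero π o d hd (Nat.le_zero.1 hx)
    subst hxo
    exact ⟨Walk.nil, by simp [hdo]⟩
  | succ n ih =>
    intro x hx
    by_cases h : x = o
    · subst h
      exact ⟨Walk.nil, by simp [hdo]⟩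
    · have hdx := hd x h
      obtain ⟨w, hw⟩ := ih (π x) (by omega)
      exact ⟨Walk.cons (adj_parent π o d hd h) w, by simp [hw]; omega⟩

lemma dist_eq (hπo : π o = o) (hdo : d o = 0)
    (hd : ∀ v, v ≠ o → d v = d (π v) + 1) (x : V) : (PG π).dist o x = d x := by
  apply le_antisymm
  · obtain ⟨w, hw⟩ := exists_walk π o d hπo hdo hd (d x) x le_rfl
    have := SimpleGraph.dist_le w.reverse
    rwa [Walk.length_reverse, hw] at this
  · obtain ⟨w, hw⟩ :=
      ((reach π o d hπo hd (d x) x le_rfl).symm).exists_walk_length_eq_dist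
    have := d_le_walk π o d hπo hd w
    rw [hdo, hw] at this
    simpa using this

lemma children_eq (hπo : π o = o) (hdo : d o = 0)
    (hd : ∀ v, v ≠ o → d v = d (π v) + 1) (v : V) :
    children (PG π) o v = {u | u ≠ o ∧ π u = v} := by
  ext u
  simp only [children, Set.mem_setOf_eq, pg_adj, dist_eq π o d hπo hdo hd]
  constructor
  · rintro ⟨⟨hne, h1 | h1⟩, hdist⟩
    · exfalso
      have hvo : v ≠ o := by
        rintro rfl
        rw [hπo] at h1
        exact hne h1
      have := hd v hvo
      rw [h1] at this
      omega
    · refine ⟨fun e => ?_, h1⟩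
      rw [e, hdo] at hdist
      omega
  · rintro ⟨huo, h1⟩
    have hdu := hd u huo
    rw [h1] at hdu
    refine ⟨⟨fun e => ?_, Or.inr h1⟩, by omega⟩
    rw [← e] at hdu
    omega

lemma neighborSet_root (hπo : π o = o) :
    (PG π).neighborSet o = {u | u ≠ o ∧ π u = o} := by
  ext u
  simp only [mem_neighborSet, pg_adj, Set.mem_setOf_eq]
  constructor
  · rintro ⟨hne, h1 | h1⟩
    · rw [hπo] at h1
      exact absurd h1 hne
    · exact ⟨Ne.symm hne, h1⟩
  · rintro ⟨hne, h1⟩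
    exact ⟨Ne.symm hne, Or.inr h1⟩

lemma neighborSet_eq (hπo : π o = o) (hd : ∀ v, v ≠ o → d v = d (π v) + 1)
    {v : V} (hv : v ≠ o) :
    (PG π).neighborSet v = insert (π v) {u | u ≠ o ∧ π u = v} := by
  ext u
  simp only [mem_neighborSet, pg_adj, Set.mem_insert_iff, Set.mem_setOf_eq]
  constructor
  · rintro ⟨hne, h1 | h1⟩
    · exact Or.inl h1.symm
    · refine Or.inr ⟨fun e => ?_, h1⟩
      rw [e, hπo] at h1
      exact hv h1.symm
  · rintro (rfl | ⟨huo, h1⟩)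
    · exact ⟨(pi_ne π o d hd hv).symm, Or.inl rfl⟩
    · refine ⟨fun e => ?_, Or.inr h1⟩
      rw [← e] at h1
      exact pi_ne π o d hd hv h1

end TFP

namespace Con

open SimpleGraph Set TFP

abbrev Vm (m : ℕ) : Type := ℕ ⊕ (ℕ × Fin m × ℕ)

def piM (m : ℕ) : Vm m → Vm m
  | .inl 0 => .inl 0
  | .inl (n+1) => .inl n
  | .inr (n, _, 0) => .inl n
  | .inr (n, j, k+1) => .inr (n, j, k)

def dM (m : ℕ) : Vm m → ℕ
  | .inl n => n
  | .inr (n, _, k) => n + k + 1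

lemma hd (m : ℕ) : ∀ v : Vm m, v ≠ .inl 0 → dM m v = dM m (piM m v) + 1 := by
  rintro (n | ⟨n, j, k⟩) h
  · cases n with
    | zero => exact absurd rfl h
    | succ n => simp [piM, dM]
  · cases k with
    | zero => simp [piM, dM]
    | succ k => simp [piM, dM]; omega

lemma fiber_inl (m n : ℕ) : {u : Vm m | u ≠ .inl 0 ∧ piM m u = .inl n} =
    insert (.inl (n+1)) (Set.range fun j : Fin m => (.inr (n, j, 0) : Vm m)) := by
  ext u
  rcases u with n' | ⟨n', j', k'⟩
  · cases n' with
    | zero => simp [piM]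
    | succ n' => simp [piM]
  · cases k' with
    | zero =>
      simp only [piM, Set.mem_setOf_eq, Set.mem_insert_iff, Set.mem_range]
      constructor
      · rintro ⟨-, h⟩
        simp only [Sum.inl.injEq] at h
        exact Or.inr ⟨j', by rw [h]⟩
      · rintro (h | ⟨j, h⟩)
        · exact absurd h (by simp)
        · simp only [Sum.inr.injEq, Prod.mk.injEq] at h
          exact ⟨by simp, by simp [h.1]⟩
    | succ k' => simp [piM]
  
lemma fiber_inr (m n k : ℕ) (j : Fin m) :
    {u : Vm m | u ≠ .inl 0 ∧ piM m u = .inr (n, j, k)} = {.inr (n, j, k+1)} := by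
  ext u
  rcases u with n' | ⟨n', j', k'⟩
  · cases n' with
    | zero => simp [piM]
    | succ n' => simp [piM]
  · cases k' with
    | zero => simp [piM]
    | succ k' =>
      simp only [piM, Set.mem_setOf_eq, Set.mem_singleton_iff, Sum.inr.injEq,
        Prod.mk.injEq]
      constructor
      · rintro ⟨-, h1, h2, h3⟩
        exact ⟨h1, h2, by omega⟩
      · rintro ⟨h1, h2, h3⟩
        exact ⟨by simp, h1, h2, by omega⟩

lemma children_inl (m n : ℕ) :
    children (TFP.PG (piM m)) (.inl 0) (.inl n) =
      insert (.inl (n+1)) (Set.range fun j : Fin m => (.inr (n, j, 0) : Vm m)) := by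
  rw [TFP.children_eq (piM m) (.inl 0) (dM m) rfl rfl (hd m), fiber_inl]

lemma children_inr (m n k : ℕ) (j : Fin m) :
    children (TFP.PG (piM m)) (.inl 0) (.inr (n, j, k)) = {.inr (n, j, k+1)} := by
  rw [TFP.children_eq (piM m) (.inl 0) (dM m) rfl rfl (hd m), fiber_inr]

lemma range_ncard (m n : ℕ) :
    (Set.range fun j : Fin m => (.inr (n, j, 0) : Vm m)).ncard = m := by
  rw [← Set.image_univ, Set.ncard_image_of_injective _ (by
    intro a b h
    simpa using h), Set.ncard_univ]
  simp

lemma br_inl (m n : ℕ) : br (TFP.PG (piM m)) (.inl 0) (.inl n) = m + 1 := by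
  rw [br, children_inl, Set.ncard_insert_of_notMem (by simp) (Set.finite_range _),
    range_ncard]

lemma br_inr (m n k : ℕ) (j : Fin m) :
    br (TFP.PG (piM m)) (.inl 0) (.inr (n, j, k)) = 1 := by
  rw [br, children_inr, Set.ncard_singleton]

lemma nbhd_ray0 (m n : ℕ) (j : Fin m) :
    (TFP.PG (piM m)).neighborSet (.inr (n, j, 0)) =
      insert (.inl n) {(.inr (n, j, 1) : Vm m)} := by
  rw [TFP.neighborSet_eq (piM m) (.inl 0) (dM m) rfl (hd m) (by simp)]
  show insert (piM m (.inr (n,j,0))) _ = _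
  rw [show piM m (.inr (n,j,0)) = .inl n from rfl, fiber_inr]

lemma nbhd_rayk (m n k : ℕ) (j : Fin m) :
    (TFP.PG (piM m)).neighborSet (.inr (n, j, k+1)) =
      insert (.inr (n, j, k)) {(.inr (n, j, k+2) : Vm m)} := by
  rw [TFP.neighborSet_eq (piM m) (.inl 0) (dM m) rfl (hd m) (by simp)]
  show insert (piM m (.inr (n,j,k+1))) _ = _
  rw [show piM m (.inr (n,j,k+1)) = .inr (n,j,k) from rfl, fiber_inr]

lemma shift_ray0 (m n : ℕ) (j : Fin m) (f : Vm m → ℂ) :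
    shiftOp (TFP.PG (piM m)) f (.inr (n, j, 0)) = f (.inl n) + f (.inr (n, j, 1)) := by
  rw [shiftOp, nbhd_ray0, finsum_mem_insert _ (by simp) (Set.finite_singleton _),
    finsum_mem_singleton]

lemma shift_rayk (m n k : ℕ) (j : Fin m) (f : Vm m → ℂ) :
    shiftOp (TFP.PG (piM m)) f (.inr (n, j, k+1)) =
      f (.inr (n, j, k)) + f (.inr (n, j, k+2)) := by
  rw [shiftOp, nbhd_rayk, finsum_mem_insert _ (by simp) (Set.finite_singleton _),
    finsum_mem_singleton]

lemma ray_zero (m : ℕ) {p : ℝ} (hp : 1 ≤ p) (f : Vm m → ℂ)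
    (hf : Summable fun v => ‖f v‖ ^ p)
    (heq : ∀ (n : ℕ) (j : Fin m) (k : ℕ), f (.inr (n,j,k)) + f (.inr (n,j,k+2)) = 0) :
    ∀ (n : ℕ) (j : Fin m) (k : ℕ), f (.inr (n,j,k)) = 0 := by
  intro n j k
  have hnorm : ∀ i : ℕ, ‖f (.inr (n, j, k + 2*i))‖ = ‖f (.inr (n,j,k))‖ := by
    intro i
    induction i with
    | zero => simp
    | succ i ih =>
      have h2 := heq n j (k + 2*i)
      have he : f (.inr (n, j, k + 2*(i+1))) = - f (.inr (n, j, k + 2*i)) := by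
        have hk : k + 2*(i+1) = (k + 2*i) + 2 := by omega
        rw [hk]
        linear_combination h2
      rw [he, norm_neg, ih]
  have hg : Function.Injective (fun i : ℕ => (.inr (n, j, k + 2*i) : Vm m)) := by
    intro a b h
    simp only [Sum.inr.injEq, Prod.mk.injEq] at h
    omega
  have hsum := hf.comp_injective hg
  have hsum' : Summable (fun _ : ℕ => ‖f (.inr (n,j,k))‖ ^ p) :=
    hsum.congr fun i => by simp only [Function.comp_apply]; rw [hnorm i]
  have h0 := (summable_const_iff _).1 hsum'
  have hz := (Real.rpow_eq_zero (norm_nonneg _) (by linarith)).1 h0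
  simpa using hz

end Con

open Con

/-- For every integer `M > 1` there exists a leafless rooted tree `T`
of bounded degree in which every vertex has exactly `1` or exactly `M` children,
infinitely many vertices have exactly `M` children and infinitely many have exactly `1`
child (so the essential maximum branching number is `M` and the essential minimum is `1`),
such that for every `1 ≤ p < ∞` the kernel of the shift on `ℓ^p(T)` is trivial. -/
theorem stmt10 (M : ℕ) (hM : 1 < M) :
    ∃ (V : Type) (_ : Countable V) (_ : Infinite V) (T : SimpleGraph V) (o : V),
      T.IsTree ∧
      (∀ v, (T.neighborSet v).Finite) ∧
      (∃ D : ℕ, ∀ v, (T.neighborSet v).ncard ≤ D) ∧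
      (∀ v, br T o v = 1 ∨ br T o v = M) ∧
      {v | br T o v = M}.Infinite ∧
      {v | br T o v = 1}.Infinite ∧
      (∀ v, (children T o v).Nonempty) ∧
      (∀ p : ℝ, 1 ≤ p →
        ∀ f : V → ℂ, memlp f p → (∀ u, shiftOp T f u = 0) → f = 0) := by
  obtain ⟨m, rfl⟩ : ∃ m, M = m + 1 := ⟨M - 1, by omega⟩
  have hm : 0 < m := by omega
  set j0 : Fin m := ⟨0, hm⟩
  have hfib : ∀ v : Vm m, {u : Vm m | u ≠ .inl 0 ∧ piM m u = v}.Finite := by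
    rintro (n | ⟨n, j, k⟩)
    · rw [fiber_inl]
      exact (Set.finite_range _).insert _
    · rw [fiber_inr]
      exact Set.finite_singleton _
  have hnb : ∀ v : Vm m, (TFP.PG (piM m)).neighborSet v ⊆
      insert (piM m v) {u : Vm m | u ≠ .inl 0 ∧ piM m u = v} := by
    intro v
    by_cases hv : v = Sum.inl 0
    · subst hv
      rw [TFP.neighborSet_root (piM m) (.inl 0) rfl]
      exact Set.subset_insert _ _
    · rw [TFP.neighborSet_eq (piM m) (.inl 0) (dM m) rfl (hd m) hv]
  have hfibcard : ∀ v : Vm m, {u : Vm m | u ≠ .inl 0 ∧ piM m u = v}.ncard ≤ m + 1 := by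
    rintro (n | ⟨n, j, k⟩)
    · rw [fiber_inl, Set.ncard_insert_of_notMem (by simp) (Set.finite_range _),
        range_ncard]
    · rw [fiber_inr, Set.ncard_singleton]
      omega
  refine ⟨Vm m, inferInstance, inferInstance, TFP.PG (piM m), Sum.inl 0,
    TFP.isTree (piM m) (.inl 0) (dM m) rfl rfl (hd m), ?_, ⟨m + 2, ?_⟩, ?_, ?_, ?_, ?_, ?_⟩
  · intro v
    exact ((hfib v).insert _).subset (hnb v)
  · intro v
    calc ((TFP.PG (piM m)).neighborSet v).ncard
        ≤ (insert (piM m v) {u : Vm m | u ≠ .inl 0 ∧ piM m u = v}).ncard :=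
          Set.ncard_le_ncard (hnb v) ((hfib v).insert _)
      _ ≤ {u : Vm m | u ≠ .inl 0 ∧ piM m u = v}.ncard + 1 := Set.ncard_insert_le _ _
      _ ≤ m + 2 := by have := hfibcard v; omega
  · rintro (n | ⟨n, j, k⟩)
    · exact Or.inr (br_inl m n)
    · exact Or.inl (br_inr m n k j)
  · exact Set.infinite_of_injective_forall_mem (f := fun n : ℕ => (.inl n : Vm m))
      Sum.inl_injective (fun n => br_inl m n)
  · exact Set.infinite_of_injective_forall_mem
      (f := fun k : ℕ => (.inr (0, j0, k) : Vm m))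
      (fun a b h => by simpa using h) (fun k => br_inr m 0 k j0)
  · rintro (n | ⟨n, j, k⟩)
    · rw [children_inl]
      exact ⟨.inl (n+1), Set.mem_insert _ _⟩
    · rw [children_inr]
      exact ⟨.inr (n, j, k+1), rfl⟩
  · intro p hp f hf hS
    have heq : ∀ (n : ℕ) (j : Fin m) (k : ℕ),
        f (.inr (n,j,k)) + f (.inr (n,j,k+2)) = 0 := by
      intro n j k
      have := hS (.inr (n, j, k+1))
      rwa [shift_rayk] at this
    have hray := ray_zero m hp f hf heq
    funext v
    rcases v with n | ⟨n, j, k⟩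
    · have h0 := hS (.inr (n, j0, 0))
      rw [shift_ray0, hray n j0 1] at h0
      simpa using h0
    · simpa using hray n j k
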